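/- Let Φ = f + g with f : ℝ^d → ℝ convex with L-Lipschitz gradient and g : ℝ^d → ℝ continuous convex, let x⋆ be a minimizer of Φ, let r ≥ 2 and 0 < s ≤ 1/L, and let x_k, y_k be the FISTA iterates x_k = y_{k−1} − s·G_s(y_{k−1}), y_k = x_k + ((k−1)/(k+r))(x_k − x_{k−1}) with x₀ = y₀. Define the Lyapunov function E(k) = sk(k+r)(Φ(x_k) − Φ(x⋆)) + (1/2)‖√s(k−1)v_k + r(x_k − x⋆)‖², where v_k = (x_k − x_{k−1})/√s. Then for every k ≥ 1, E(k+1) − E(k) ≤ −(s²(k+r)²/2)(1 − sL)‖G_s(y_k)‖² − s[(r−2)k + r² − r − 1](Φ(x_{k+1}) − Φ(x⋆)). -/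

import Mathlib

open scoped RealInnerProductSpace
open Filter Topology Set

section Aux

variable {E : Type*} [NormedAddCommGroup E] [InnerProductSpace ℝ E] [CompleteSpace E]

/-- 1-D gradient inequality for convex functions. -/
lemma onedim_grad_ineq {φ : ℝ → ℝ} {d : ℝ} (hconv : ConvexOn ℝ Set.univ φ)
    (hd : HasDerivAt φ d 0) : φ 0 + d ≤ φ 1 := by
  have hslope : Tendsto (slope φ 0) (𝓝[>] 0) (𝓝 d) :=
    (hasDerivAt_iff_tendsto_slope.1 hd).mono_left
      (nhdsWithin_mono _ (fun t ht => ne_of_gt ht))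
  have hev : ∀ᶠ t in 𝓝[>] (0:ℝ), slope φ 0 t ≤ φ 1 - φ 0 := by
    filter_upwards [Ioc_mem_nhdsGT_of_mem (by simp : (0:ℝ) ∈ Set.Ico (0:ℝ) 1)] with t ht
    have hc := hconv.2 (Set.mem_univ (1:ℝ)) (Set.mem_univ (0:ℝ)) (by linarith [ht.1] : (0:ℝ) ≤ t)
      (by linarith [ht.2] : (0:ℝ) ≤ 1 - t) (by ring)
    simp only [smul_eq_mul, mul_one, mul_zero, add_zero] at hc
    rw [slope_def_field, sub_zero]
    rw [div_le_iff₀ ht.1]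
    nlinarith [ht.1, ht.2]
  linarith [le_of_tendsto hslope hev]

lemma hasDerivAt_line {f : E → ℝ} {f' : E → E} (hf : ∀ x, HasGradientAt f (f' x) x)
    (a u : E) (t : ℝ) :
    HasDerivAt (fun t : ℝ => f (a + t • u)) ⟪f' (a + t • u), u⟫ t := by
  have hline : HasDerivAt (fun t : ℝ => a + t • u) u t := by
    simpa using ((hasDerivAt_id t).smul_const u).const_add a
  have h := (hasGradientAt_iff_hasFDerivAt.1 (hf (a + t • u))).comp_hasDerivAt t hline
  simpa [InnerProductSpace.toDual_apply_apply, Function.comp_def] using h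

/-- Gradient inequality for convex functions. -/
lemma grad_convex_ineq {f : E → ℝ} {f' : E → E} (hconv : ConvexOn ℝ Set.univ f)
    (hf : ∀ x, HasGradientAt f (f' x) x) (x z : E) :
    f x + ⟪f' x, z - x⟫ ≤ f z := by
  have hφ : ConvexOn ℝ Set.univ (fun t : ℝ => f (x + t • (z - x))) := by
    have h := hconv.comp_affineMap (AffineMap.lineMap x z)
    simp only [Set.preimage_univ] at h
    have heq : (fun t : ℝ => f (x + t • (z - x))) = f ∘ (AffineMap.lineMap x z) := by
      funext t
      simp [AffineMap.lineMap_apply, add_comm]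
    rw [heq]
    exact h
  have hd := hasDerivAt_line hf x (z - x) 0
  simp only [zero_smul, add_zero] at hd
  have := onedim_grad_ineq hφ hd
  simpa using this

/-- Descent lemma for functions with Lipschitz gradient. -/
lemma descent_lemma {f : E → ℝ} {f' : E → E} {L : ℝ}
    (hf : ∀ x, HasGradientAt f (f' x) x)
    (hlip : ∀ x y, ‖f' x - f' y‖ ≤ L * ‖x - y‖) (a b : E) :
    f b ≤ f a + ⟪f' a, b - a⟫ + L / 2 * ‖b - a‖ ^ 2 := by
  set u := b - a with hu
  set ψ : ℝ → ℝ := fun t =>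
    L / 2 * (‖a‖ ^ 2 + 2 * t * ⟪a, u⟫ + t ^ 2 * ‖u‖ ^ 2) - f (a + t • u) with hψ
  have hψd : ∀ t : ℝ, HasDerivAt ψ
      (L * (⟪a, u⟫ + t * ‖u‖ ^ 2) - ⟪f' (a + t • u), u⟫) t := by
    intro t
    have h1 : HasDerivAt (fun t : ℝ => L / 2 * (‖a‖ ^ 2 + 2 * t * ⟪a, u⟫ + t ^ 2 * ‖u‖ ^ 2))
        (L * (⟪a, u⟫ + t * ‖u‖ ^ 2)) t := by
      have hA : HasDerivAt (fun t : ℝ => 2 * t * ⟪a, u⟫) (2 * ⟪a, u⟫) t := by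
        simpa using ((hasDerivAt_id t).const_mul (2:ℝ)).mul_const ⟪a, u⟫
      have hB : HasDerivAt (fun t : ℝ => t ^ 2 * ‖u‖ ^ 2) (2 * t * ‖u‖ ^ 2) t := by
        simpa using (hasDerivAt_pow 2 t).mul_const (‖u‖ ^ 2)
      have h := (((hasDerivAt_const t (‖a‖ ^ 2)).add hA).add hB).const_mul (L / 2)
      refine h.congr_deriv ?_
      ring
    exact h1.sub (hasDerivAt_line hf a u t)
  have hdiff : Differentiable ℝ ψ := fun t => (hψd t).differentiableAt
  have hderiv : deriv ψ = fun t => L * (⟪a, u⟫ + t * ‖u‖ ^ 2) - ⟪f' (a + t • u), u⟫ :=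
    funext fun t => (hψd t).deriv
  have hmono : Monotone (deriv ψ) := by
    rw [hderiv]
    intro t1 t2 ht
    have hdist : (a + t2 • u) - (a + t1 • u) = (t2 - t1) • u := by module
    have h1 : ⟪f' (a + t2 • u) - f' (a + t1 • u), u⟫ ≤
        ‖f' (a + t2 • u) - f' (a + t1 • u)‖ * ‖u‖ := real_inner_le_norm _ _
    have h2 : ‖f' (a + t2 • u) - f' (a + t1 • u)‖ ≤ L * ((t2 - t1) * ‖u‖) := by
      have h := hlip (a + t2 • u) (a + t1 • u)
      rwa [hdist, norm_smul, Real.norm_eq_abs, abs_of_nonneg (by linarith)] at h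
    have h3 : ⟪f' (a + t2 • u) - f' (a + t1 • u), u⟫ =
        ⟪f' (a + t2 • u), u⟫ - ⟪f' (a + t1 • u), u⟫ := inner_sub_left _ _ _
    have hnu : (0:ℝ) ≤ ‖u‖ := norm_nonneg u
    simp only
    nlinarith [mul_le_mul_of_nonneg_right h2 hnu]
  have hconv : ConvexOn ℝ Set.univ ψ := Monotone.convexOn_univ_of_deriv hdiff hmono
  have key := onedim_grad_ineq hconv (by simpa using hψd 0)
  have hψ0 : ψ 0 = L / 2 * ‖a‖ ^ 2 - f a := by simp [hψ]
  have hab : a + (1:ℝ) • u = b := by rw [hu]; module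
  have hψ1 : ψ 1 = L / 2 * (‖a‖ ^ 2 + 2 * ⟪a, u⟫ + ‖u‖ ^ 2) - f b := by
    simp only [hψ]
    rw [hab]
    ring
  rw [hψ0, hψ1] at key
  have hnorm : ‖u‖ ^ 2 = ‖b - a‖ ^ 2 := by rw [hu]
  have hinner : ⟪f' a, b - a⟫ = ⟪f' a, u⟫ := by rw [hu]
  have hkey2 : ⟪a, u⟫ = ⟪a, u⟫ := rfl
  nlinarith [key]

/-- Proximal subgradient inequality. -/
lemma prox_ineq {g : E → ℝ} (hg : ConvexOn ℝ Set.univ g) {s : ℝ} (hs : 0 < s)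
    (u p : E) (hmin : IsMinOn (fun z => 1 / (2 * s) * ‖z - u‖ ^ 2 + g z) Set.univ p)
    (z : E) : g p ≤ g z + s⁻¹ * ⟪p - u, z - p⟫ := by
  set C : ℝ := 1 / (2 * s) * ‖z - p‖ ^ 2 with hC
  have hCnn : 0 ≤ C := by positivity
  have hstep : ∀ t : ℝ, t ∈ Set.Ioc (0:ℝ) 1 →
      g p - g z - s⁻¹ * ⟪p - u, z - p⟫ ≤ t * C := by
    intro t ht
    have hmem := hmin (Set.mem_univ (p + t • (z - p)))
    simp only [Set.mem_setOf_eq] at hmem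
    have hexp : ‖p + t • (z - p) - u‖ ^ 2 =
        ‖p - u‖ ^ 2 + 2 * t * ⟪p - u, z - p⟫ + t ^ 2 * ‖z - p‖ ^ 2 := by
      rw [show p + t • (z - p) - u = (p - u) + t • (z - p) by module]
      rw [norm_add_sq_real, real_inner_smul_right, norm_smul, Real.norm_eq_abs, mul_pow, sq_abs]
      ring
    have hgc : g (p + t • (z - p)) ≤ (1 - t) * g p + t * g z := by
      have h := hg.2 (Set.mem_univ p) (Set.mem_univ z) (by linarith [ht.2] : (0:ℝ) ≤ 1 - t)
        (le_of_lt ht.1) (by ring)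
      have heq : (1 - t) • p + t • z = p + t • (z - p) := by module
      rw [heq] at h
      simpa using h
    have hineq : 1 / (2 * s) * ‖p - u‖ ^ 2 + g p ≤
        1 / (2 * s) * (‖p - u‖ ^ 2 + 2 * t * ⟪p - u, z - p⟫ + t ^ 2 * ‖z - p‖ ^ 2)
          + ((1 - t) * g p + t * g z) := by
      calc 1 / (2 * s) * ‖p - u‖ ^ 2 + g p ≤ _ := hmem
        _ ≤ _ := by rw [hexp]; linarith [hgc]
    have hdist : 1 / (2 * s) * (‖p - u‖ ^ 2 + 2 * t * ⟪p - u, z - p⟫ + t ^ 2 * ‖z - p‖ ^ 2)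
        = 1 / (2 * s) * ‖p - u‖ ^ 2 + t * (s⁻¹ * ⟪p - u, z - p⟫) + t * (t * C) := by
      rw [hC]
      field_simp
    have key : t * (g p - g z - s⁻¹ * ⟪p - u, z - p⟫) ≤ t * (t * C) := by
      nlinarith [hineq, hdist]
    exact (mul_le_mul_iff_right₀ ht.1).mp key
  have hlim : Tendsto (fun t : ℝ => t * C) (𝓝[>] 0) (𝓝 0) := by
    have h : Tendsto (fun t : ℝ => t * C) (𝓝 0) (𝓝 (0 * C)) :=
      (continuous_id.mul continuous_const).tendsto 0
    simpa using h.mono_left nhdsWithin_le_nhds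
  have hev : ∀ᶠ t in 𝓝[>] (0:ℝ), g p - g z - s⁻¹ * ⟪p - u, z - p⟫ ≤ t * C := by
    filter_upwards [Ioc_mem_nhdsGT_of_mem (by simp : (0:ℝ) ∈ Set.Ico (0:ℝ) 1)] with t ht
    exact hstep t ht
  have := ge_of_tendsto hlim hev
  linarith

/-- Key one-step inequality for the proximal gradient step. -/
lemma fista_key {f g : E → ℝ} {f' : E → E} {L s : ℝ} (hs : 0 < s)
    (hfconv : ConvexOn ℝ Set.univ f) (hf : ∀ x, HasGradientAt f (f' x) x)
    (hlip : ∀ x y, ‖f' x - f' y‖ ≤ L * ‖x - y‖) (hgconv : ConvexOn ℝ Set.univ g)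
    (y p z : E)
    (hp : IsMinOn (fun w => 1 / (2 * s) * ‖w - (y - s • f' y)‖ ^ 2 + g w) Set.univ p) :
    f p + g p ≤ f z + g z + ⟪s⁻¹ • (y - p), y - z⟫ - s * ‖s⁻¹ • (y - p)‖ ^ 2
      + s ^ 2 * L / 2 * ‖s⁻¹ • (y - p)‖ ^ 2 := by
  set A' : ℝ := ⟪f' y, y - z⟫ with hA'
  set B' : ℝ := ⟪f' y, y - p⟫ with hB'
  set C' : ℝ := ⟪y - p, y - z⟫ with hC'
  set N : ℝ := ‖y - p‖ ^ 2 with hN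
  have h1 : f p ≤ f y - B' + L / 2 * N := by
    have h := descent_lemma hf hlip y p
    have e1 : ⟪f' y, p - y⟫ = -B' := by
      rw [hB', show p - y = -(y - p) by module, inner_neg_right]
    have e2 : ‖p - y‖ ^ 2 = N := by rw [hN, norm_sub_rev]
    rw [e1, e2] at h
    linarith
  have h2 : f y ≤ f z + A' := by
    have h := grad_convex_ineq hfconv hf y z
    have e1 : ⟪f' y, z - y⟫ = -A' := by
      rw [hA', show z - y = -(y - z) by module, inner_neg_right]
    rw [e1] at h
    linarith
  have h3 : g p ≤ g z + (B' - A') - s⁻¹ * N + s⁻¹ * C' := by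
    have h := prox_ineq hgconv hs (y - s • f' y) p hp z
    have einner : ⟪p - (y - s • f' y), z - p⟫ = s * (B' - A') - (N - C') := by
      rw [show p - (y - s • f' y) = s • f' y - (y - p) by module,
        show z - p = (y - p) - (y - z) by module]
      rw [hA', hB', hC', hN]
      simp only [inner_sub_left, inner_sub_right, real_inner_smul_left,
        real_inner_self_eq_norm_sq, real_inner_comm p y, real_inner_comm z y,
        real_inner_comm p z, real_inner_comm (f' y) p, real_inner_comm (f' y) z]
      rw [norm_sub_sq_real, real_inner_comm y p]
      ring
    rw [einner] at h
    have hss : s⁻¹ * s = 1 := inv_mul_cancel₀ hs.ne'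
    have : s⁻¹ * (s * (B' - A') - (N - C')) = (B' - A') - s⁻¹ * N + s⁻¹ * C' := by
      field_simp
      ring
    rw [this] at h
    linarith
  have eG1 : ⟪s⁻¹ • (y - p), y - z⟫ = s⁻¹ * C' := by
    rw [real_inner_smul_left, hC']
  have eG2 : ‖s⁻¹ • (y - p)‖ ^ 2 = s⁻¹ ^ 2 * N := by
    rw [norm_smul, Real.norm_eq_abs, mul_pow, sq_abs, hN]
  rw [eG1, eG2]
  have efin : f z + g z + s⁻¹ * C' - s * (s⁻¹ ^ 2 * N) + s ^ 2 * L / 2 * (s⁻¹ ^ 2 * N)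
      = f z + g z + s⁻¹ * C' - s⁻¹ * N + L / 2 * N := by
    field_simp
  rw [efin]
  linarith

/-- The final scalar bookkeeping. -/
lemma fista_arith (s r K L P2 P1 Ps A B NG W2 : ℝ)
    (hK : 1 ≤ K) (hs : 0 < s) (hr : 2 ≤ r)
    (h1 : P2 ≤ P1 + A - s * NG + s ^ 2 * L / 2 * NG)
    (h2 : P2 ≤ Ps + B - s * NG + s ^ 2 * L / 2 * NG) :
    (s * (K + 1) * (K + 1 + r) * (P2 - Ps) +
        1 / 2 * (W2 - 2 * (s * (K + r)) * (K * A + r * B) + (s * (K + r)) ^ 2 * NG)) -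
      (s * K * (K + r) * (P1 - Ps) + 1 / 2 * W2) ≤
    -(s ^ 2 * (K + r) ^ 2 / 2) * (1 - s * L) * NG -
      s * ((r - 2) * K + r ^ 2 - r - 1) * (P2 - Ps) := by
  have hα : 0 ≤ s * K * (K + r) :=
    mul_nonneg (mul_nonneg hs.le (by linarith)) (by linarith)
  have hβ : 0 ≤ s * r * (K + r) :=
    mul_nonneg (mul_nonneg hs.le (by linarith)) (by linarith)
  nlinarith [mul_le_mul_of_nonneg_left h1 hα, mul_le_mul_of_nonneg_left h2 hβ]

end Aux

/-- **Lyapunov decay for FISTA (implicit-velocity form).** With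
`E(k) = sk(k+r)(Φ(x_k) − Φ(x⋆)) + ½‖√s(k−1)v_k + r(x_k − x⋆)‖²`, `v_k = (x_k − x_{k−1})/√s`,
for momentum `r ≥ 2` and step size `0 < s ≤ 1/L`, one has for every `k ≥ 1`:
`E(k+1) − E(k) ≤ −(s²(k+r)²/2)(1 − sL)‖G_s(y_k)‖² − s[(r−2)k + r² − r − 1](Φ(x_{k+1}) − Φ(x⋆))`. -/
theorem fista_lyapunov_decay {d : ℕ}
    (f g : EuclideanSpace ℝ (Fin d) → ℝ)
    (f' : EuclideanSpace ℝ (Fin d) → EuclideanSpace ℝ (Fin d))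
    (L s r : ℝ) (hL : 0 < L) (hs : 0 < s) (hr : 2 ≤ r)
    (hfconv : ConvexOn ℝ Set.univ f)
    (hf' : ∀ x, HasGradientAt f (f' x) x)
    (hlip : ∀ x y, ‖f' x - f' y‖ ≤ L * ‖x - y‖)
    (hgconv : ConvexOn ℝ Set.univ g) (hgcont : Continuous g)
    (Φ : EuclideanSpace ℝ (Fin d) → ℝ) (hΦ : ∀ x, Φ x = f x + g x)
    (P : EuclideanSpace ℝ (Fin d) → EuclideanSpace ℝ (Fin d))
    (hP : ∀ x, IsMinOn (fun z => 1 / (2 * s) * ‖z - (x - s • f' x)‖ ^ 2 + g z) Set.univ (P x))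
    (G : EuclideanSpace ℝ (Fin d) → EuclideanSpace ℝ (Fin d))
    (hG : ∀ x, G x = s⁻¹ • (x - P x))
    (xstar : EuclideanSpace ℝ (Fin d)) (hstar : IsMinOn Φ Set.univ xstar)
    (x y : ℕ → EuclideanSpace ℝ (Fin d)) (hxy0 : x 0 = y 0)
    (hx : ∀ k : ℕ, x (k + 1) = y k - s • G (y k))
    (hy : ∀ k : ℕ, y (k + 1) =
      x (k + 1) + ((((k : ℝ) + 1) - 1) / (((k : ℝ) + 1) + r)) • (x (k + 1) - x k))
    (hsL : s ≤ 1 / L)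
    (v : ℕ → EuclideanSpace ℝ (Fin d))
    (hv : ∀ k : ℕ, 1 ≤ k → v k = (Real.sqrt s)⁻¹ • (x k - x (k - 1))) :
    ∀ k : ℕ, 1 ≤ k →
      (s * ((k : ℝ) + 1) * (((k : ℝ) + 1) + r) * (Φ (x (k + 1)) - Φ xstar) +
          1 / 2 * ‖(Real.sqrt s * (((k : ℝ) + 1) - 1)) • v (k + 1) +
            r • (x (k + 1) - xstar)‖ ^ 2) -
        (s * (k : ℝ) * ((k : ℝ) + r) * (Φ (x k) - Φ xstar) +
          1 / 2 * ‖(Real.sqrt s * ((k : ℝ) - 1)) • v k + r • (x k - xstar)‖ ^ 2) ≤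
      -(s ^ 2 * ((k : ℝ) + r) ^ 2 / 2) * (1 - s * L) * ‖G (y k)‖ ^ 2 -
        s * ((r - 2) * (k : ℝ) + r ^ 2 - r - 1) * (Φ (x (k + 1)) - Φ xstar) := by
  intro k hk
  obtain ⟨m, rfl⟩ : ∃ m, k = m + 1 := ⟨k - 1, by omega⟩
  have hsq : Real.sqrt s ≠ 0 := (Real.sqrt_pos.mpr hs).ne'
  have h0 : (0 : ℝ) < (m : ℝ) + 1 + r := by
    have := Nat.cast_nonneg (α := ℝ) m
    linarith
  have hKr : ((m : ℝ) + 1 + r) ≠ 0 := ne_of_gt h0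
  have hv1 := hv (m + 1) (by omega)
  have hv2 := hv (m + 1 + 1) (by omega)
  simp only [Nat.add_sub_cancel] at hv1 hv2
  have hyk := hy m
  have hx2 := hx (m + 1)
  have hGy := hG (y (m + 1))
  have hX2P : x (m + 1 + 1) = P (y (m + 1)) := by
    rw [hx2, hGy, smul_smul, mul_inv_cancel₀ hs.ne', one_smul, sub_sub_cancel]
  -- the two applications of the key inequality
  have hkey1 : Φ (x (m + 1 + 1)) ≤ Φ (x (m + 1)) +
      ⟪G (y (m + 1)), y (m + 1) - x (m + 1)⟫ - s * ‖G (y (m + 1))‖ ^ 2 +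
      s ^ 2 * L / 2 * ‖G (y (m + 1))‖ ^ 2 := by
    have h := fista_key hs hfconv hf' hlip hgconv (y (m + 1)) (P (y (m + 1))) (x (m + 1))
      (hP (y (m + 1)))
    rw [← hGy, ← hX2P, ← hΦ, ← hΦ] at h
    exact h
  have hkey2 : Φ (x (m + 1 + 1)) ≤ Φ xstar +
      ⟪G (y (m + 1)), y (m + 1) - xstar⟫ - s * ‖G (y (m + 1))‖ ^ 2 +
      s ^ 2 * L / 2 * ‖G (y (m + 1))‖ ^ 2 := by
    have h := fista_key hs hfconv hf' hlip hgconv (y (m + 1)) (P (y (m + 1))) xstar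
      (hP (y (m + 1)))
    rw [← hGy, ← hX2P, ← hΦ, ← hΦ] at h
    exact h
  -- rewrite the velocity terms
  push_cast
  rw [hv1, hv2, smul_smul, smul_smul]
  have hco1 : Real.sqrt s * ((m : ℝ) + 1 + 1 - 1) * (Real.sqrt s)⁻¹ = (m : ℝ) + 1 := by
    field_simp
    ring
  have hco2 : Real.sqrt s * ((m : ℝ) + 1 - 1) * (Real.sqrt s)⁻¹ = (m : ℝ) := by
    field_simp
    ring
  rw [hco1, hco2]
  -- key algebraic identities for the Lyapunov vectors
  have hw_alt : ((m : ℝ)) • (x (m + 1) - x m) + r • (x (m + 1) - xstar)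
      = ((m : ℝ) + 1) • (y (m + 1) - x (m + 1)) + r • (y (m + 1) - xstar) := by
    rw [hyk]
    match_scalars <;> (field_simp; try ring)
  have hwp : ((m : ℝ) + 1) • (x (m + 1 + 1) - x (m + 1)) + r • (x (m + 1 + 1) - xstar)
      = (((m : ℝ)) • (x (m + 1) - x m) + r • (x (m + 1) - xstar))
        - (s * ((m : ℝ) + 1 + r)) • G (y (m + 1)) := by
    rw [hw_alt, hx2]
    module
  have hGw : ⟪G (y (m + 1)), ((m : ℝ)) • (x (m + 1) - x m) + r • (x (m + 1) - xstar)⟫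
      = ((m : ℝ) + 1) * ⟪G (y (m + 1)), y (m + 1) - x (m + 1)⟫ +
        r * ⟪G (y (m + 1)), y (m + 1) - xstar⟫ := by
    rw [hw_alt, inner_add_right, real_inner_smul_right, real_inner_smul_right]
  have hnw : ‖((m : ℝ) + 1) • (x (m + 1 + 1) - x (m + 1)) + r • (x (m + 1 + 1) - xstar)‖ ^ 2
      = ‖((m : ℝ)) • (x (m + 1) - x m) + r • (x (m + 1) - xstar)‖ ^ 2
        - 2 * (s * ((m : ℝ) + 1 + r)) *
            (((m : ℝ) + 1) * ⟪G (y (m + 1)), y (m + 1) - x (m + 1)⟫ +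
              r * ⟪G (y (m + 1)), y (m + 1) - xstar⟫)
        + (s * ((m : ℝ) + 1 + r)) ^ 2 * ‖G (y (m + 1))‖ ^ 2 := by
    rw [hwp, norm_sub_sq_real, real_inner_smul_right,
      real_inner_comm (G (y (m + 1)))
        (((m : ℝ)) • (x (m + 1) - x m) + r • (x (m + 1) - xstar)),
      hGw, norm_smul, Real.norm_eq_abs, mul_pow, sq_abs]
    ring
  rw [hnw]
  have harith := fista_arith s r ((m : ℝ) + 1) L (Φ (x (m + 1 + 1))) (Φ (x (m + 1))) (Φ xstar)
    (⟪G (y (m + 1)), y (m + 1) - x (m + 1)⟫) (⟪G (y (m + 1)), y (m + 1) - xstar⟫)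
    (‖G (y (m + 1))‖ ^ 2)
    (‖((m : ℝ)) • (x (m + 1) - x m) + r • (x (m + 1) - xstar)‖ ^ 2)
    (by linarith [Nat.cast_nonneg (α := ℝ) m]) hs hr hkey1 hkey2
  linarith [harith]
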